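/- For any set of positions P of R and any character α, δ(P,α) equals the union over all v ∈ Ñ⊙(P,α) of δ⊙(v,α) together with the union over all u ∈ Ñ∗(P,α) of δ∗(u,α), where Ñ⊙(P,α) and Ñ∗(P,α) are the relevant ⊙- and ∗-transition nodes. -/
import Mathlib


/-- Non-empty regular expressions over alphabet `α`, identified with their parse trees. -/
inductive RE (α : Type) : Type where
  | eps : RE α
  | ch : α → RE α
  | cat : RE α → RE α → RE α
  | alt : RE α → RE α → RE α
  | star : RE α → RE α

/-- Child directions in the parse tree (a `star`-node only has an `L` child). -/
inductive Dir : Type where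
  | L : Dir
  | R : Dir
  deriving DecidableEq

/-- A node of the parse tree is identified with the path from the root to it. -/
abbrev TreePath : Type := List Dir

namespace RE

variable {α : Type}

/-- The subexpression of `R` rooted at the node reached by following path `v`
(`none` if no such node exists). -/
def sub : RE α → TreePath → Option (RE α)
  | r, [] => some r
  | .cat r _, .L :: p => sub r p
  | .cat _ s, .R :: p => sub s p
  | .alt r _, .L :: p => sub r p
  | .alt _ s, .R :: p => sub s p
  | .star r, .L :: p => sub r p
  | _, _ => none

/-- `v` is a node of the parse tree of `R`. -/
def IsNode (R : RE α) (v : TreePath) : Prop := ∃ r, R.sub v = some r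

/-- The label of a position (character leaf); `none` if `p` is not a position. -/
def labelOf (R : RE α) (p : TreePath) : Option α :=
  match R.sub p with
  | some (.ch a) => some a
  | _ => none

/-- `p` is a position of `R`, i.e. a leaf labeled by a character. -/
def IsPos (R : RE α) (p : TreePath) : Prop := ∃ a, R.labelOf p = some a

/-- `v` is a `⊙`-node (concatenation node). -/
def IsCatNode (R : RE α) (v : TreePath) : Prop := ∃ r s, R.sub v = some (.cat r s)

/-- `v` is a `∗`-node (Kleene-star node). -/
def IsStarNode (R : RE α) (v : TreePath) : Prop := ∃ r, R.sub v = some (.star r)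

/-- `PosSeq r w` holds when `w` is a sequence of (paths to) positions of `r`
whose labels spell some string of `L(r)`. -/
inductive PosSeq : RE α → List TreePath → Prop where
  | eps : PosSeq .eps []
  | ch (a : α) : PosSeq (.ch a) [[]]
  | cat {r s : RE α} {u v : List TreePath} : PosSeq r u → PosSeq s v →
      PosSeq (.cat r s) (u.map (Dir.L :: ·) ++ v.map (Dir.R :: ·))
  | altL {r s : RE α} {u : List TreePath} : PosSeq r u → PosSeq (.alt r s) (u.map (Dir.L :: ·))
  | altR {r s : RE α} {v : List TreePath} : PosSeq s v → PosSeq (.alt r s) (v.map (Dir.R :: ·))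
  | starNil {r : RE α} : PosSeq (.star r) []
  | starCons {r : RE α} {u w : List TreePath} : PosSeq r u → PosSeq (.star r) w →
      PosSeq (.star r) (u.map (Dir.L :: ·) ++ w)

/-- `first(v)`: the positions (as paths in `R`) that occur first in a position
sequence of the subexpression rooted at `v`. -/
def firstSet (R : RE α) (v : TreePath) : Set TreePath :=
  {p | ∃ r, R.sub v = some r ∧ ∃ p' w, PosSeq r (p' :: w) ∧ p = v ++ p'}

/-- `last(v)`: the positions (as paths in `R`) that occur last in a position
sequence of the subexpression rooted at `v`. -/
def lastSet (R : RE α) (v : TreePath) : Set TreePath :=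
  {p | ∃ r, R.sub v = some r ∧ ∃ w p', PosSeq r (w ++ [p']) ∧ p = v ++ p'}

/-- `follow(R,p)`: the positions that can follow `p` in a position sequence of `R`. -/
def followSet (R : RE α) (p : TreePath) : Set TreePath :=
  {q | ∃ w₁ w₂, PosSeq R (w₁ ++ p :: q :: w₂)}

/-- `firstextent(p) = {v : p ∈ first(v)}`. -/
def firstExtent (R : RE α) (p : TreePath) : Set TreePath := {v | p ∈ R.firstSet v}

/-- `lastextent(p) = {v : p ∈ last(v)}`. -/
def lastExtent (R : RE α) (p : TreePath) : Set TreePath := {v | p ∈ R.lastSet v}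

/-- `firstextent(P)` for a set of positions `P`. -/
def firstExtentSet (R : RE α) (P : Set TreePath) : Set TreePath := ⋃ p ∈ P, R.firstExtent p

/-- `lastextent(P)` for a set of positions `P`. -/
def lastExtentSet (R : RE α) (P : Set TreePath) : Set TreePath := ⋃ p ∈ P, R.lastExtent p

end RE

/-- Lowest common ancestor of two nodes = longest common prefix of the paths. -/
def lcaP : TreePath → TreePath → TreePath
  | a :: p, b :: q => if a = b then a :: lcaP p q else []
  | _, _ => []

namespace RE

variable {α : Type}

/-- `u = parent*(v)`: `u` is the lowest ancestor of `v` (possibly `v` itself)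
that is a `∗`-node. -/
def IsLowestStarAnc (R : RE α) (v u : TreePath) : Prop :=
  u <+: v ∧ R.IsStarNode u ∧ ∀ w, w <+: v → R.IsStarNode w → w <+: u

/-- `δ(p,α)`: the `α`-transitions of the position automaton out of position `p`. -/
def delta (R : RE α) (p : TreePath) (a : α) : Set TreePath :=
  {q | R.labelOf q = some a ∧ q ∈ R.followSet p}

/-- `δ(P,α) = ∪_{p ∈ P} δ(p,α)`. -/
def deltaSet (R : RE α) (P : Set TreePath) (a : α) : Set TreePath := ⋃ p ∈ P, R.delta p a

/-- Internal `⊙`-transition: `δ⊙(v,α) = {q ∈ Pos_α : right(v) ∈ firstextent(q)}`. -/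
def deltaOdot (R : RE α) (v : TreePath) (a : α) : Set TreePath :=
  {q | R.labelOf q = some a ∧ q ∈ R.firstSet (v ++ [Dir.R])}

/-- Internal `∗`-transition: `δ∗(v,α) = {q ∈ Pos_α : parent*(v) ∈ firstextent(q)}`. -/
def deltaStar (R : RE α) (v : TreePath) (a : α) : Set TreePath :=
  {q | R.labelOf q = some a ∧ ∃ u, R.IsLowestStarAnc v u ∧ q ∈ R.firstSet u}

/-- `N⊙(P,α)`: the `⊙`-transition nodes. -/
def NOdot (R : RE α) (P : Set TreePath) (a : α) : Set TreePath :=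
  {v | R.IsCatNode v ∧ (v ++ [Dir.L]) ∈ R.lastExtentSet P ∧
    (∃ q, R.labelOf q = some a ∧ q ∈ R.firstSet (v ++ [Dir.R]))}

/-- `N∗(P,α)`: the `∗`-transition nodes. -/
def NStar (R : RE α) (P : Set TreePath) (a : α) : Set TreePath :=
  {u | R.IsStarNode u ∧
    (∃ p ∈ P, ∃ q, R.labelOf q = some a ∧ R.IsLowestStarAnc (lcaP p q) u) ∧
    (∃ p ∈ P, p ∈ R.lastSet u) ∧ (∃ q, R.labelOf q = some a ∧ q ∈ R.firstSet u)}

/-- `u` `∗`-dominates `v`: `u` is a proper ancestor of `v` and `first(v) ⊆ first(u)`. -/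
def StarDom (R : RE α) (u v : TreePath) : Prop :=
  u <+: v ∧ u ≠ v ∧ R.firstSet v ⊆ R.firstSet u

/-- `u` `⊙`-dominates `v`: `u` is a proper ancestor of `v` and
`first(right(v)) ⊆ first(right(u))`. -/
def OdotDom (R : RE α) (u v : TreePath) : Prop :=
  u <+: v ∧ u ≠ v ∧ R.firstSet (v ++ [Dir.R]) ⊆ R.firstSet (u ++ [Dir.R])

/-- `Ñ⊙(P,α)`: the relevant `⊙`-transition nodes. -/
def RelNOdot (R : RE α) (P : Set TreePath) (a : α) : Set TreePath :=
  {v ∈ R.NOdot P a | ∀ u ∈ R.NOdot P a, ¬ R.OdotDom u v}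

/-- `Ñ∗(P,α)`: the relevant `∗`-transition nodes. -/
def RelNStar (R : RE α) (P : Set TreePath) (a : α) : Set TreePath :=
  {v ∈ R.NStar P a | ∀ u ∈ R.NStar P a, ¬ R.StarDom u v}

/-- `v` is a node of the transition tree `T` of `P`: an ancestor of some position of `P`. -/
def InT (R : RE α) (P : Set TreePath) (v : TreePath) : Prop := ∃ p ∈ P, v <+: p

/-- `v` is a branching node of the transition tree of `P`: both children are in `T`. -/
def Branching (R : RE α) (P : Set TreePath) (v : TreePath) : Prop :=
  R.InT P (v ++ [Dir.L]) ∧ R.InT P (v ++ [Dir.R])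

/-- `v` is a leaf of the transition tree of `P`. -/
def LeafT (R : RE α) (P : Set TreePath) (v : TreePath) : Prop :=
  R.InT P v ∧ ∀ d : Dir, ¬ R.InT P (v ++ [d])

/-- `v` is a `⊙`-live node: a `⊙`-node with `left(v) ∈ lastextent(P)`. -/
def OdotLive (R : RE α) (P : Set TreePath) (v : TreePath) : Prop :=
  R.IsCatNode v ∧ (v ++ [Dir.L]) ∈ R.lastExtentSet P

/-- `v` is weakly `⊙`-dominated by `u`: `u` is `⊙`-live, a proper ancestor of `v`,
and `first(v) ⊆ first(right(u))`. -/
def WeakOdotDom (R : RE α) (P : Set TreePath) (u v : TreePath) : Prop :=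
  R.OdotLive P u ∧ u <+: v ∧ u ≠ v ∧ R.firstSet v ⊆ R.firstSet (u ++ [Dir.R])

/-- The pair `(t, b)` delimits a segment of the transition tree of `P`: a path from a
leaf or branching node `b` up to the nearest branching node `t` strictly above it
(or to the root if there is none). -/
def IsSegment (R : RE α) (P : Set TreePath) (t b : TreePath) : Prop :=
  R.InT P b ∧ t <+: b ∧ t ≠ b ∧
  (R.LeafT P b ∨ R.Branching P b) ∧
  (R.Branching P t ∨ t = []) ∧
  (∀ w, t <+: w → w <+: b → w ≠ t → w ≠ b → ¬ R.Branching P w)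

/-- The language `L(R)`. -/
def lang : RE α → Set (List α)
  | .eps => {[]}
  | .ch a => {[a]}
  | .cat r s => {w | ∃ u ∈ lang r, ∃ v ∈ lang s, w = u ++ v}
  | .alt r s => lang r ∪ lang s
  | .star r => {w | ∃ l : List (List α), (∀ u ∈ l, u ∈ lang r) ∧ w = l.flatten}

/-- The position automaton (Glushkov automaton) of `R`: states are the positions of `R`
plus a start state `none`; for `q ∈ first(R)` there is a transition `(p₀, q, label(q))`,
and for `q ∈ follow(R,p)` a transition `(p, q, label(q))`; accepting states are
`last(R)`, together with `p₀` if `ε ∈ L(R)`. -/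
def posNFA (R : RE α) : NFA α (Option TreePath) where
  step := fun s a =>
    {t | ∃ q : TreePath, t = some q ∧ R.labelOf q = some a ∧
      ((s = none ∧ q ∈ R.firstSet []) ∨ (∃ p, s = some p ∧ q ∈ R.followSet p))}
  start := {none}
  accept := {t | (∃ p, t = some p ∧ p ∈ R.lastSet []) ∨ (t = none ∧ [] ∈ R.lang)}

end RE
namespace RE
variable {α : Type}

open Dir List

theorem sub_append {R r : RE α} {v : TreePath} (h : R.sub v = some r) (w : TreePath) :
    R.sub (v ++ w) = r.sub w := by
  induction v generalizing R with
  | nil => simp [sub] at h; subst h; rfl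
  | cons d v ih =>
    cases R with
    | eps => simp [sub] at h
    | ch a => simp [sub] at h
    | cat r s => cases d <;> exact ih h
    | alt r s => cases d <;> exact ih h
    | star r => cases d with
      | L => exact ih h
      | R => simp [sub] at h

theorem exists_posSeq (r : RE α) : ∃ w, PosSeq r w := by
  induction r with
  | eps => exact ⟨_, .eps⟩
  | ch a => exact ⟨_, .ch a⟩
  | cat r s ihr ihs => obtain ⟨u, hu⟩ := ihr; obtain ⟨v, hv⟩ := ihs; exact ⟨_, .cat hu hv⟩
  | alt r s ihr _ => obtain ⟨u, hu⟩ := ihr; exact ⟨_, .altL hu⟩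
  | star r _ => exact ⟨_, .starNil⟩

theorem lift_first {R r : RE α} {c x p : TreePath} (hc : R.sub c = some r)
    (h : p ∈ r.firstSet x) : (c ++ p) ∈ R.firstSet (c ++ x) := by
  obtain ⟨r', hr', p', w, hseq, hp⟩ := h
  exact ⟨r', by rw [sub_append hc]; exact hr', p', w, hseq, by rw [hp, append_assoc]⟩

theorem lift_last {R r : RE α} {c x p : TreePath} (hc : R.sub c = some r)
    (h : p ∈ r.lastSet x) : (c ++ p) ∈ R.lastSet (c ++ x) := by
  obtain ⟨r', hr', w, p', hseq, hp⟩ := h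
  exact ⟨r', by rw [sub_append hc]; exact hr', w, p', hseq, by rw [hp, append_assoc]⟩

theorem lift_label {R r : RE α} {c p : TreePath} {a : α} (hc : R.sub c = some r)
    (h : r.labelOf p = some a) : R.labelOf (c ++ p) = some a := by
  unfold labelOf at *
  rw [sub_append hc]; exact h

theorem lift_star {R r : RE α} {c s : TreePath} (hc : R.sub c = some r)
    (h : r.IsStarNode s) : R.IsStarNode (c ++ s) := by
  obtain ⟨r', hr'⟩ := h
  exact ⟨r', by rw [sub_append hc]; exact hr'⟩

theorem posSeq_star_append' {R : RE α} {w₁ w₂ : List TreePath} (h₁ : PosSeq R w₁) :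
    PosSeq R w₂ → (∃ r, R = .star r) → PosSeq R (w₁ ++ w₂) := by
  induction h₁ with
  | starNil => intro h₂ _; simpa using h₂
  | starCons hu hw ihu ihw => intro h₂ hr; rw [append_assoc]; exact .starCons hu (ihw h₂ hr)
  | _ => rintro _ ⟨r, h⟩; simp at h

theorem posSeq_star_append {r : RE α} {w₁ w₂ : List TreePath}
    (h₁ : PosSeq (RE.star r) w₁) (h₂ : PosSeq (RE.star r) w₂) :
    PosSeq (RE.star r) (w₁ ++ w₂) :=
  posSeq_star_append' h₁ h₂ ⟨r, rfl⟩

theorem embed {R r : RE α} {c : TreePath} (hc : R.sub c = some r) {w : List TreePath}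
    (h : PosSeq r w) : ∃ w₁ w₂, PosSeq R (w₁ ++ w.map (c ++ ·) ++ w₂) := by
  induction c generalizing R with
  | nil =>
    simp [sub] at hc; subst hc
    exact ⟨[], [], by simpa using h⟩
  | cons d c ih =>
    cases R with
    | eps => simp [sub] at hc
    | ch a => simp [sub] at hc
    | cat r' s' =>
      cases d with
      | L =>
        obtain ⟨w₁, w₂, hseq⟩ := ih hc
        obtain ⟨ws, hws⟩ := exists_posSeq s'
        refine ⟨w₁.map (Dir.L :: ·), w₂.map (Dir.L :: ·) ++ ws.map (Dir.R :: ·), ?_⟩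
        have := PosSeq.cat hseq hws
        simpa [map_map, Function.comp_def, append_assoc] using this
      | R =>
        obtain ⟨w₁, w₂, hseq⟩ := ih hc
        obtain ⟨ws, hws⟩ := exists_posSeq r'
        refine ⟨ws.map (Dir.L :: ·) ++ w₁.map (Dir.R :: ·), w₂.map (Dir.R :: ·), ?_⟩
        have := PosSeq.cat hws hseq
        simpa [map_map, Function.comp_def, append_assoc] using this
    | alt r' s' =>
      cases d with
      | L =>
        obtain ⟨w₁, w₂, hseq⟩ := ih hc
        refine ⟨w₁.map (Dir.L :: ·), w₂.map (Dir.L :: ·), ?_⟩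
        have := PosSeq.altL (s := s') hseq
        simpa [map_map, Function.comp_def, append_assoc] using this
      | R =>
        obtain ⟨w₁, w₂, hseq⟩ := ih hc
        refine ⟨w₁.map (Dir.R :: ·), w₂.map (Dir.R :: ·), ?_⟩
        have := PosSeq.altR (r := r') hseq
        simpa [map_map, Function.comp_def, append_assoc] using this
    | star r' =>
      cases d with
      | L =>
        obtain ⟨w₁, w₂, hseq⟩ := ih hc
        refine ⟨w₁.map (Dir.L :: ·), w₂.map (Dir.L :: ·), ?_⟩
        have := PosSeq.starCons hseq (.starNil)
        simpa [map_map, Function.comp_def, append_assoc] using this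
      | R => simp [sub] at hc

end RE
section ListHelpers
variable {γ β : Type*}
open List

theorem adj_split {A B w₁ w₂ : List γ} {p q : γ} (h : A ++ B = w₁ ++ p :: q :: w₂) :
    (∃ u₁ u₂, A = u₁ ++ p :: q :: u₂) ∨ (∃ u₁ u₂, B = u₁ ++ p :: q :: u₂) ∨
    ((∃ A', A = A' ++ [p]) ∧ (∃ B', B = q :: B')) := by
  induction w₁ generalizing A with
  | nil =>
    match A, h with
    | [], h => right; left; exact ⟨[], w₂, h⟩
    | [x], h =>
      simp at h
      obtain ⟨h1, h2⟩ := h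
      right; right; exact ⟨⟨[], by simp [h1]⟩, ⟨w₂, by rw [h2]⟩⟩
    | x :: y :: A', h =>
      simp at h
      obtain ⟨h1, h2, h3⟩ := h
      left; exact ⟨[], A', by simp [h1, h2, ← h3]⟩
  | cons x w₁ ih =>
    match A, h with
    | [], h => right; left; exact ⟨x :: w₁, w₂, h⟩
    | a :: A', h =>
      simp at h
      obtain ⟨h1, h2⟩ := h
      rcases ih h2 with ⟨u₁, u₂, h3⟩ | h3 | ⟨⟨A'', h3⟩, h4⟩
      · left; exact ⟨a :: u₁, u₂, by simp [h3]⟩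
      · right; left; exact h3
      · right; right; exact ⟨⟨a :: A'', by simp [h3]⟩, h4⟩

theorem map_cons_inv {f : γ → β} {u : List γ} {w : List β} {x : β}
    (h : u.map f = x :: w) :
    ∃ x₀ u', u = x₀ :: u' ∧ f x₀ = x ∧ u'.map f = w := by
  match u, h with
  | y :: u', h => simp at h; exact ⟨y, u', rfl, h.1, h.2⟩

theorem map_adj {f : γ → β} {u : List γ} {w₁ w₂ : List β} {p q : β}
    (h : u.map f = w₁ ++ p :: q :: w₂) :
    ∃ u₁ p₀ q₀ u₂, u = u₁ ++ p₀ :: q₀ :: u₂ ∧ p = f p₀ ∧ q = f q₀ := by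
  obtain ⟨u₁, u₂, rfl, h1, h2⟩ := List.map_eq_append_iff.mp h
  obtain ⟨p₀, u₂', rfl, hp, h3⟩ := map_cons_inv h2
  obtain ⟨q₀, u₂'', rfl, hq, _⟩ := map_cons_inv h3
  exact ⟨u₁, p₀, q₀, u₂'', rfl, hp.symm, hq.symm⟩

theorem last_split {A B w : List γ} {x : γ} (h : A ++ B = w ++ [x]) :
    (B = [] ∧ A = w ++ [x]) ∨ (∃ B', B = B' ++ [x] ∧ w = A ++ B') := by
  rcases eq_nil_or_concat B with hB | ⟨B', y, hB⟩
  · left; exact ⟨hB, by simpa [hB] using h⟩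
  · right
    subst hB
    have h' : (A ++ B') ++ [y] = w ++ [x] := by simpa [concat_eq_append, append_assoc] using h
    obtain ⟨h3, h4⟩ := append_inj' h' rfl
    cases h4
    exact ⟨B', by simp [concat_eq_append], h3.symm⟩

theorem head_split {A B w : List γ} {x : γ} (h : A ++ B = x :: w) :
    (A = [] ∧ B = x :: w) ∨ (∃ A', A = x :: A' ∧ w = A' ++ B) := by
  match A, h with
  | [], h => left; exact ⟨rfl, h⟩
  | a :: A', h => right; simp at h; exact ⟨A', by simp [h.1], h.2.symm⟩

theorem map_concat_inv {f : γ → β} {u : List γ} {w : List β} {x : β}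
    (h : u.map f = w ++ [x]) :
    ∃ u' x₀, u = u' ++ [x₀] ∧ f x₀ = x ∧ u'.map f = w := by
  rcases eq_nil_or_concat u with hu | ⟨u', y, hu⟩
  · subst hu; simp at h
  · subst hu
    rw [concat_eq_append, map_append] at h
    obtain ⟨h1, h2⟩ := append_inj' h rfl
    cases h2
    exact ⟨u', y, by simp [concat_eq_append], rfl, h1⟩

end ListHelpers

theorem lcaP_cons (a : Dir) (p q : TreePath) : lcaP (a :: p) (a :: q) = a :: lcaP p q := by
  simp [lcaP]

theorem lcaP_prefix_left : ∀ p q : TreePath, lcaP p q <+: p := by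
  intro p
  induction p with
  | nil => intro q; cases q <;> simp [lcaP]
  | cons a p ih =>
    intro q
    cases q with
    | nil => simp [lcaP]
    | cons b q =>
      by_cases h : a = b
      · subst h; rw [lcaP_cons]; exact List.cons_prefix_cons.mpr ⟨rfl, ih q⟩
      · simp [lcaP, h]

theorem lcaP_prefix_right : ∀ p q : TreePath, lcaP p q <+: q := by
  intro p
  induction p with
  | nil => intro q; cases q <;> simp [lcaP]
  | cons a p ih =>
    intro q
    cases q with
    | nil => simp [lcaP]
    | cons b q =>
      by_cases h : a = b
      · subst h; rw [lcaP_cons]; exact List.cons_prefix_cons.mpr ⟨rfl, ih q⟩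
      · simp [lcaP, h]
namespace RE
variable {α : Type}
open List

theorem last_sub' {r : RE α} {W : List TreePath} (h : PosSeq r W) :
    ∀ w x d, W = w ++ [x] → d <+: x →
      ∃ r', r.sub d = some r' ∧ ∃ w' x', PosSeq r' (w' ++ [x']) ∧ x = d ++ x' := by
  induction h with
  | eps => intro w x d hW _; simp at hW
  | ch a =>
    intro w x d hW hd
    have hw : w = [] ∧ x = [] := by
      cases w with
      | nil => simpa using hW.symm
      | cons y w => simp at hW
    obtain ⟨rfl, rfl⟩ := hw
    rw [prefix_nil] at hd; subst hd
    exact ⟨.ch a, rfl, [], [], .ch a, rfl⟩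
  | @cat r s u v hu hv ihu ihv =>
    intro w x d hW hd
    rcases d with _ | ⟨e, d'⟩
    · exact ⟨_, rfl, w, x, hW ▸ PosSeq.cat hu hv, by simp⟩
    rcases last_split hW with ⟨hv0, hu0⟩ | ⟨B', hB, hw0⟩
    · obtain ⟨u', x₀, rfl, hfx, hmap⟩ := map_concat_inv hu0
      subst hfx
      obtain ⟨rfl, hd'⟩ := List.cons_prefix_cons.mp hd
      obtain ⟨r', hr', w', x', hseq, hx⟩ := ihu u' x₀ d' rfl hd'
      exact ⟨r', hr', w', x', hseq, by simp [hx]⟩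
    · obtain ⟨v', x₀, rfl, hfx, hmap⟩ := map_concat_inv hB
      subst hfx
      obtain ⟨rfl, hd'⟩ := List.cons_prefix_cons.mp hd
      obtain ⟨r', hr', w', x', hseq, hx⟩ := ihv v' x₀ d' rfl hd'
      exact ⟨r', hr', w', x', hseq, by simp [hx]⟩
  | @altL r s u hu ihu =>
    intro w x d hW hd
    rcases d with _ | ⟨e, d'⟩
    · exact ⟨_, rfl, w, x, hW ▸ PosSeq.altL hu, by simp⟩
    obtain ⟨u', x₀, rfl, hfx, hmap⟩ := map_concat_inv hW
    subst hfx
    obtain ⟨rfl, hd'⟩ := List.cons_prefix_cons.mp hd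
    obtain ⟨r', hr', w', x', hseq, hx⟩ := ihu u' x₀ d' rfl hd'
    exact ⟨r', hr', w', x', hseq, by simp [hx]⟩
  | @altR r s v hv ihv =>
    intro w x d hW hd
    rcases d with _ | ⟨e, d'⟩
    · exact ⟨_, rfl, w, x, hW ▸ PosSeq.altR hv, by simp⟩
    obtain ⟨v', x₀, rfl, hfx, hmap⟩ := map_concat_inv hW
    subst hfx
    obtain ⟨rfl, hd'⟩ := List.cons_prefix_cons.mp hd
    obtain ⟨r', hr', w', x', hseq, hx⟩ := ihv v' x₀ d' rfl hd'
    exact ⟨r', hr', w', x', hseq, by simp [hx]⟩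
  | starNil => intro w x d hW _; simp at hW
  | @starCons r u wtl hu hw ihu ihw =>
    intro w x d hW hd
    rcases last_split hW with ⟨hw0, hu0⟩ | ⟨B', hB, hw0⟩
    · rcases d with _ | ⟨e, d'⟩
      · exact ⟨_, rfl, w, x, hW ▸ PosSeq.starCons hu hw, by simp⟩
      obtain ⟨u', x₀, rfl, hfx, hmap⟩ := map_concat_inv hu0
      subst hfx
      obtain ⟨rfl, hd'⟩ := List.cons_prefix_cons.mp hd
      obtain ⟨r', hr', w', x', hseq, hx⟩ := ihu u' x₀ d' rfl hd'
      exact ⟨r', hr', w', x', hseq, by simp [hx]⟩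
    · exact ihw B' x d hB hd

theorem first_sub' {r : RE α} {W : List TreePath} (h : PosSeq r W) :
    ∀ x w d, W = x :: w → d <+: x →
      ∃ r', r.sub d = some r' ∧ ∃ x' w', PosSeq r' (x' :: w') ∧ x = d ++ x' := by
  induction h with
  | eps => intro x w d hW _; simp at hW
  | ch a =>
    intro x w d hW hd
    obtain ⟨hx, hw⟩ : ([] : TreePath) = x ∧ [] = w := by simpa using hW
    subst hx; subst hw
    rw [prefix_nil] at hd; subst hd
    exact ⟨.ch a, rfl, [], [], .ch a, rfl⟩
  | @cat r s u v hu hv ihu ihv =>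
    intro x w d hW hd
    rcases d with _ | ⟨e, d'⟩
    · exact ⟨_, rfl, x, w, hW ▸ PosSeq.cat hu hv, by simp⟩
    rcases head_split hW with ⟨hu0, hv0⟩ | ⟨A', hA, hw0⟩
    · obtain ⟨x₀, v', rfl, hfx, hmap⟩ := map_cons_inv hv0
      subst hfx
      obtain ⟨rfl, hd'⟩ := List.cons_prefix_cons.mp hd
      obtain ⟨r', hr', x', w', hseq, hx⟩ := ihv x₀ v' d' rfl hd'
      exact ⟨r', hr', x', w', hseq, by simp [hx]⟩
    · obtain ⟨x₀, u', rfl, hfx, hmap⟩ := map_cons_inv hA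
      subst hfx
      obtain ⟨rfl, hd'⟩ := List.cons_prefix_cons.mp hd
      obtain ⟨r', hr', x', w', hseq, hx⟩ := ihu x₀ u' d' rfl hd'
      exact ⟨r', hr', x', w', hseq, by simp [hx]⟩
  | @altL r s u hu ihu =>
    intro x w d hW hd
    rcases d with _ | ⟨e, d'⟩
    · exact ⟨_, rfl, x, w, hW ▸ PosSeq.altL hu, by simp⟩
    obtain ⟨x₀, u', rfl, hfx, hmap⟩ := map_cons_inv hW
    subst hfx
    obtain ⟨rfl, hd'⟩ := List.cons_prefix_cons.mp hd
    obtain ⟨r', hr', x', w', hseq, hx⟩ := ihu x₀ u' d' rfl hd'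
    exact ⟨r', hr', x', w', hseq, by simp [hx]⟩
  | @altR r s v hv ihv =>
    intro x w d hW hd
    rcases d with _ | ⟨e, d'⟩
    · exact ⟨_, rfl, x, w, hW ▸ PosSeq.altR hv, by simp⟩
    obtain ⟨x₀, v', rfl, hfx, hmap⟩ := map_cons_inv hW
    subst hfx
    obtain ⟨rfl, hd'⟩ := List.cons_prefix_cons.mp hd
    obtain ⟨r', hr', x', w', hseq, hx⟩ := ihv x₀ v' d' rfl hd'
    exact ⟨r', hr', x', w', hseq, by simp [hx]⟩
  | starNil => intro x w d hW _; simp at hW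
  | @starCons r u wtl hu hw ihu ihw =>
    intro x w d hW hd
    rcases head_split hW with ⟨hu0, hw0⟩ | ⟨A', hA, hw0⟩
    · exact ihw x w d hw0 hd
    · rcases d with _ | ⟨e, d'⟩
      · exact ⟨_, rfl, x, w, hW ▸ PosSeq.starCons hu hw, by simp⟩
      obtain ⟨x₀, u', rfl, hfx, hmap⟩ := map_cons_inv hA
      subst hfx
      obtain ⟨rfl, hd'⟩ := List.cons_prefix_cons.mp hd
      obtain ⟨r', hr', x', w', hseq, hx⟩ := ihu x₀ u' d' rfl hd'
      exact ⟨r', hr', x', w', hseq, by simp [hx]⟩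

theorem last_mono {R : RE α} {p v u : TreePath} (h : p ∈ R.lastSet v)
    (hvu : v <+: u) (hup : u <+: p) : p ∈ R.lastSet u := by
  obtain ⟨r, hr, w, x, hseq, rfl⟩ := h
  obtain ⟨d, rfl⟩ := hvu
  have hdx : d <+: x := (prefix_append_right_inj v).mp hup
  obtain ⟨r', hr', w', x', hseq', hx⟩ := last_sub' hseq w x d rfl hdx
  exact ⟨r', by rw [sub_append hr]; exact hr', w', x', hseq', by rw [hx, append_assoc]⟩

theorem first_mono {R : RE α} {p v u : TreePath} (h : p ∈ R.firstSet v)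
    (hvu : v <+: u) (hup : u <+: p) : p ∈ R.firstSet u := by
  obtain ⟨r, hr, x, w, hseq, rfl⟩ := h
  obtain ⟨d, rfl⟩ := hvu
  have hdx : d <+: x := (prefix_append_right_inj v).mp hup
  obtain ⟨r', hr', x', w', hseq', hx⟩ := first_sub' hseq x w d rfl hdx
  exact ⟨r', by rw [sub_append hr]; exact hr', x', w', hseq', by rw [hx, append_assoc]⟩

theorem exists_lowest_star {R : RE α} (m : TreePath) :
    (∃ s, s <+: m ∧ R.IsStarNode s) → ∃ u, R.IsLowestStarAnc m u := by
  induction m using List.reverseRecOn with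
  | nil =>
    rintro ⟨s, hs, hstar⟩
    rw [prefix_nil] at hs; subst hs
    exact ⟨[], prefix_refl _, hstar, fun w hw _ => hw⟩
  | append_singleton m' e ih =>
    rintro ⟨s, hs, hstar⟩
    by_cases hm : R.IsStarNode (m' ++ [e])
    · exact ⟨m' ++ [e], prefix_refl _, hm, fun w hw _ => hw⟩
    · have hs' : s <+: m' := by
        rcases prefix_concat_iff.mp hs with rfl | h
        · exact absurd hstar hm
        · exact h
      obtain ⟨u, hu1, hu2, hu3⟩ := ih ⟨s, hs', hstar⟩
      refine ⟨u, hu1.trans (prefix_append _ _), hu2, fun w hw hwstar => ?_⟩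
      rcases prefix_concat_iff.mp hw with rfl | h
      · exact absurd hwstar hm
      · exact hu3 w h hwstar

end RE
namespace RE
variable {α : Type}
open List

/-- The disjunction produced by the decomposition of a follow pair. -/
def DecompOut (R : RE α) (p q : TreePath) : Prop :=
  (∃ v, R.IsCatNode v ∧ p ∈ R.lastSet (v ++ [Dir.L]) ∧ q ∈ R.firstSet (v ++ [Dir.R]))
  ∨ (∃ s, R.IsStarNode s ∧ s <+: lcaP p q ∧ p ∈ R.lastSet s ∧ q ∈ R.firstSet s)

theorem decomp_lift {R r : RE α} {d : Dir} (hc : R.sub [d] = some r)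
    {p q : TreePath} (h : DecompOut r p q) : DecompOut R (d :: p) (d :: q) := by
  rcases h with ⟨v, ⟨r1, s1, hv⟩, hl, hf⟩ | ⟨s, hs, hpre, hl, hf⟩
  · left
    refine ⟨d :: v, ⟨r1, s1, ?_⟩, ?_, ?_⟩
    · rw [show (d :: v : TreePath) = [d] ++ v from rfl, sub_append hc]; exact hv
    · simpa using lift_last hc hl
    · simpa using lift_first hc hf
  · right
    refine ⟨d :: s, ?_, ?_, by simpa using lift_last hc hl, by simpa using lift_first hc hf⟩
    · simpa using lift_star hc hs
    · rw [lcaP_cons]; exact List.cons_prefix_cons.mpr ⟨rfl, hpre⟩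

theorem decomp {R : RE α} {W : List TreePath} (h : PosSeq R W) :
    ∀ w₁ p q w₂, W = w₁ ++ p :: q :: w₂ → DecompOut R p q := by
  induction h with
  | eps => intro w₁ p q w₂ hW; simp at hW
  | ch a =>
    intro w₁ p q w₂ hW
    have := congrArg List.length hW; simp at this; omega
  | @cat r s u v hu hv ihu ihv =>
    intro w₁ p q w₂ hW
    rcases adj_split hW with ⟨u₁, u₂, hA⟩ | ⟨u₁, u₂, hB⟩ | ⟨⟨A', hA⟩, ⟨B', hB⟩⟩
    · obtain ⟨u₁', p₀, q₀, u₂', rfl, rfl, rfl⟩ := map_adj hA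
      exact decomp_lift (r := r) (by simp [sub]) (ihu u₁' p₀ q₀ u₂' rfl)
    · obtain ⟨u₁', p₀, q₀, u₂', rfl, rfl, rfl⟩ := map_adj hB
      exact decomp_lift (r := s) (by simp [sub]) (ihv u₁' p₀ q₀ u₂' rfl)
    · obtain ⟨u', p₀, rfl, rfl, hmap⟩ := map_concat_inv hA
      obtain ⟨q₀, v', rfl, rfl, hmap'⟩ := map_cons_inv hB
      left
      refine ⟨[], ⟨r, s, rfl⟩, ⟨r, by simp [sub], u', p₀, hu, rfl⟩, ⟨s, by simp [sub], q₀, v', hv, rfl⟩⟩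
  | @altL r s u hu ihu =>
    intro w₁ p q w₂ hW
    obtain ⟨u₁', p₀, q₀, u₂', rfl, rfl, rfl⟩ := map_adj hW
    exact decomp_lift (r := r) (by simp [sub]) (ihu u₁' p₀ q₀ u₂' rfl)
  | @altR r s v hv ihv =>
    intro w₁ p q w₂ hW
    obtain ⟨u₁', p₀, q₀, u₂', rfl, rfl, rfl⟩ := map_adj hW
    exact decomp_lift (r := s) (by simp [sub]) (ihv u₁' p₀ q₀ u₂' rfl)
  | starNil => intro w₁ p q w₂ hW; simp at hW
  | @starCons r u wtl hu hw ihu ihw =>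
    intro w₁ p q w₂ hW
    rcases adj_split hW with ⟨u₁, u₂, hA⟩ | ⟨u₁, u₂, hB⟩ | ⟨⟨A', hA⟩, ⟨B', hB⟩⟩
    · obtain ⟨u₁', p₀, q₀, u₂', rfl, rfl, rfl⟩ := map_adj hA
      exact decomp_lift (r := r) (by simp [sub]) (ihu u₁' p₀ q₀ u₂' rfl)
    · exact ihw u₁ p q u₂ hB
    · obtain ⟨u', p₀, rfl, rfl, hmap⟩ := map_concat_inv hA
      right
      refine ⟨[], ⟨r, rfl⟩, nil_prefix, ?_, ?_⟩
      · refine ⟨.star r, rfl, u'.map (Dir.L :: ·), Dir.L :: p₀, ?_, by simp⟩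
        have := PosSeq.starCons hu (.starNil (r := r))
        simpa using this
      · exact ⟨.star r, rfl, q, B', hB ▸ hw, by simp⟩

end RE
namespace RE
variable {α : Type}
open List

theorem isLowestStarAnc_self {R : RE α} {u : TreePath} (h : R.IsStarNode u) :
    R.IsLowestStarAnc u u := ⟨prefix_refl _, h, fun _ hw _ => hw⟩

theorem isLowestStarAnc_unique {R : RE α} {m u₁ u₂ : TreePath}
    (h₁ : R.IsLowestStarAnc m u₁) (h₂ : R.IsLowestStarAnc m u₂) : u₁ = u₂ := by
  have a : u₁ <+: u₂ := h₂.2.2 u₁ h₁.1 h₁.2.1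
  have b : u₂ <+: u₁ := h₁.2.2 u₂ h₂.1 h₂.2.1
  exact a.eq_of_length (le_antisymm a.length_le b.length_le)

theorem mem_deltaStar_star {R : RE α} {u q : TreePath} {a : α} (h : R.IsStarNode u) :
    q ∈ R.deltaStar u a ↔ (R.labelOf q = some a ∧ q ∈ R.firstSet u) := by
  constructor
  · rintro ⟨hqa, u', hlow, hfirst⟩
    rw [isLowestStarAnc_unique hlow (isLowestStarAnc_self h)] at hfirst
    exact ⟨hqa, hfirst⟩
  · rintro ⟨hqa, hfirst⟩
    exact ⟨hqa, u, isLowestStarAnc_self h, hfirst⟩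

theorem prefix_length_lt {u v : List Dir} (h : u <+: v) (hne : u ≠ v) :
    u.length < v.length :=
  Nat.lt_of_le_of_ne h.length_le (fun he => hne (h.eq_of_length he))

theorem exists_rel_odot {R : RE α} {P : Set TreePath} {a : α} :
    ∀ v ∈ R.NOdot P a, ∃ u ∈ R.RelNOdot P a, R.deltaOdot v a ⊆ R.deltaOdot u a := by
  suffices h : ∀ n (v : TreePath), v.length ≤ n → v ∈ R.NOdot P a →
      ∃ u ∈ R.RelNOdot P a, R.deltaOdot v a ⊆ R.deltaOdot u a by
    intro v hv; exact h v.length v le_rfl hv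
  intro n
  induction n with
  | zero =>
    intro v hlen hv
    by_cases hrel : ∀ u ∈ R.NOdot P a, ¬ R.OdotDom u v
    · exact ⟨v, ⟨hv, hrel⟩, subset_rfl⟩
    · push_neg at hrel
      obtain ⟨u, huN, hdom⟩ := hrel
      have := prefix_length_lt hdom.1 hdom.2.1
      omega
  | succ n ih =>
    intro v hlen hv
    by_cases hrel : ∀ u ∈ R.NOdot P a, ¬ R.OdotDom u v
    · exact ⟨v, ⟨hv, hrel⟩, subset_rfl⟩
    · push_neg at hrel
      obtain ⟨u, huN, hdom⟩ := hrel
      have hlt := prefix_length_lt hdom.1 hdom.2.1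
      obtain ⟨u', hu', hsub⟩ := ih u (by omega) huN
      exact ⟨u', hu', fun q hq => hsub ⟨hq.1, hdom.2.2 hq.2⟩⟩

theorem exists_rel_star {R : RE α} {P : Set TreePath} {a : α} :
    ∀ v ∈ R.NStar P a, ∃ u ∈ R.RelNStar P a, R.deltaStar v a ⊆ R.deltaStar u a := by
  suffices h : ∀ n (v : TreePath), v.length ≤ n → v ∈ R.NStar P a →
      ∃ u ∈ R.RelNStar P a, R.deltaStar v a ⊆ R.deltaStar u a by
    intro v hv; exact h v.length v le_rfl hv
  intro n
  induction n with
  | zero =>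
    intro v hlen hv
    by_cases hrel : ∀ u ∈ R.NStar P a, ¬ R.StarDom u v
    · exact ⟨v, ⟨hv, hrel⟩, subset_rfl⟩
    · push_neg at hrel
      obtain ⟨u, huN, hdom⟩ := hrel
      have := prefix_length_lt hdom.1 hdom.2.1
      omega
  | succ n ih =>
    intro v hlen hv
    by_cases hrel : ∀ u ∈ R.NStar P a, ¬ R.StarDom u v
    · exact ⟨v, ⟨hv, hrel⟩, subset_rfl⟩
    · push_neg at hrel
      obtain ⟨u, huN, hdom⟩ := hrel
      have hlt := prefix_length_lt hdom.1 hdom.2.1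
      obtain ⟨u', hu', hsub⟩ := ih u (by omega) huN
      refine ⟨u', hu', fun q hq => hsub ?_⟩
      rw [mem_deltaStar_star hv.1] at hq
      rw [mem_deltaStar_star huN.1]
      exact ⟨hq.1, hdom.2.2 hq.2⟩

theorem follow_of_adj {R r : RE α} {c : TreePath} (hc : R.sub c = some r)
    {A B : List TreePath} {p₀ q₀ : TreePath} (h : PosSeq r (A ++ p₀ :: q₀ :: B)) :
    (c ++ q₀) ∈ R.followSet (c ++ p₀) := by
  obtain ⟨w₁, w₂, hseq⟩ := embed hc h
  refine ⟨w₁ ++ A.map (c ++ ·), B.map (c ++ ·) ++ w₂, ?_⟩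
  simpa [append_assoc] using hseq

end RE

/-- For any set of positions `P` of `R` and any character `α`, `δ(P,α)` is the union
over the relevant `⊙`-transition nodes `v ∈ Ñ⊙(P,α)` of `δ⊙(v,α)` together with the
union over the relevant `∗`-transition nodes `u ∈ Ñ∗(P,α)` of `δ∗(u,α)`. -/
theorem deltaSet_eq_union_relevant_nodes {α : Type} (R : RE α) (P : Set TreePath)
    (a : α) (hP : ∀ p ∈ P, R.IsPos p) :
    R.deltaSet P a =
      (⋃ v ∈ R.RelNOdot P a, R.deltaOdot v a) ∪
        (⋃ u ∈ R.RelNStar P a, R.deltaStar u a) := by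
  ext q
  constructor
  · intro hq
    rw [RE.deltaSet, Set.mem_iUnion₂] at hq
    obtain ⟨p, hp, hqa, w₁, w₂, hseq⟩ := hq
    rcases RE.decomp hseq w₁ p q w₂ rfl with ⟨v, hcat, hlast, hfirst⟩ | ⟨s, hstar, hpre, hlast, hfirst⟩
    · have hvN : v ∈ R.NOdot P a := by
        refine ⟨hcat, ?_, ⟨q, hqa, hfirst⟩⟩
        rw [RE.lastExtentSet, Set.mem_iUnion₂]
        exact ⟨p, hp, hlast⟩
      obtain ⟨u, hu, hsub⟩ := RE.exists_rel_odot v hvN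
      left
      rw [Set.mem_iUnion₂]
      exact ⟨u, hu, hsub ⟨hqa, hfirst⟩⟩
    · obtain ⟨u, hum, hustar, humin⟩ := RE.exists_lowest_star (lcaP p q) ⟨s, hpre, hstar⟩
      have hsu : s <+: u := humin s hpre hstar
      have hulast : p ∈ R.lastSet u :=
        RE.last_mono hlast hsu (hum.trans (lcaP_prefix_left p q))
      have hufirst : q ∈ R.firstSet u :=
        RE.first_mono hfirst hsu (hum.trans (lcaP_prefix_right p q))
      have huN : u ∈ R.NStar P a :=
        ⟨hustar, ⟨p, hp, q, hqa, hum, hustar, humin⟩, ⟨p, hp, hulast⟩, ⟨q, hqa, hufirst⟩⟩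
      obtain ⟨u', hu', hsub⟩ := RE.exists_rel_star u huN
      right
      rw [Set.mem_iUnion₂]
      exact ⟨u', hu', hsub ((RE.mem_deltaStar_star hustar).mpr ⟨hqa, hufirst⟩)⟩
  · intro hq
    rcases hq with hq | hq
    · rw [Set.mem_iUnion₂] at hq
      obtain ⟨v, hvrel, hqa, hqfirst⟩ := hq
      obtain ⟨⟨r, s, hsub⟩, hlastext, -⟩ := hvrel.1
      rw [RE.lastExtentSet, Set.mem_iUnion₂] at hlastext
      obtain ⟨p, hp, hplast⟩ := hlastext
      obtain ⟨r₁, hr₁, w, p₀, hseq₁, hpe⟩ := hplast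
      rw [RE.sub_append hsub] at hr₁
      have hr₁' : r = r₁ := by simpa [RE.sub] using hr₁
      subst hr₁'
      obtain ⟨s₁, hs₁, q₀, w', hseq₂, hqe⟩ := hqfirst
      rw [RE.sub_append hsub] at hs₁
      have hs₁' : s = s₁ := by simpa [RE.sub] using hs₁
      subst hs₁'
      have hcat := RE.PosSeq.cat hseq₁ hseq₂
      have hcat' : RE.PosSeq (RE.cat r s)
          ((w.map (Dir.L :: ·)) ++ (Dir.L :: p₀) :: (Dir.R :: q₀) :: (w'.map (Dir.R :: ·))) := by
        simpa using hcat
      have hfollow := RE.follow_of_adj hsub hcat'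
      rw [RE.deltaSet, Set.mem_iUnion₂]
      refine ⟨p, hp, hqa, ?_⟩
      have hpeq : p = v ++ (Dir.L :: p₀) := by simp [hpe]
      have hqeq : q = v ++ (Dir.R :: q₀) := by simp [hqe]
      rw [hpeq, hqeq]
      exact hfollow
    · rw [Set.mem_iUnion₂] at hq
      obtain ⟨u, hurel, hqd⟩ := hq
      have hustar := hurel.1.1
      obtain ⟨p, hp, hplast⟩ := hurel.1.2.2.1
      rw [RE.mem_deltaStar_star hustar] at hqd
      obtain ⟨hqa, hqfirst⟩ := hqd
      obtain ⟨r₀, hsub⟩ := hustar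
      obtain ⟨r₁, hr₁, w, p₀, hseq₁, hpe⟩ := hplast
      rw [hsub] at hr₁
      have : RE.star r₀ = r₁ := by simpa using hr₁
      subst this
      obtain ⟨r₂, hr₂, q₀, w', hseq₂, hqe⟩ := hqfirst
      rw [hsub] at hr₂
      have : RE.star r₀ = r₂ := by simpa using hr₂
      subst this
      have hcat := RE.posSeq_star_append hseq₁ hseq₂
      have hcat' : RE.PosSeq (RE.star r₀) (w ++ p₀ :: q₀ :: w') := by simpa using hcat
      have hfollow := RE.follow_of_adj hsub hcat'
      rw [RE.deltaSet, Set.mem_iUnion₂]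
      exact ⟨p, hp, hqa, hpe ▸ hqe ▸ hfollow⟩
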